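/- Let G = (V,E) be a finite graph with scale 𝒮, let K be the set of pairs (η, κ) ∈ ℝ^V × ℝ≥0^E satisfying ∑_e κ(e) ≤ 1 and the weighted isoperimetric inequalities ∑_{i∈T} η_i ≤ ∑_{e∈∂T} κ(e) for all T contained in some member of 𝒮. Then for each (η,κ) ∈ K and each k ∈ V there exists a pseudo-flow φ_k : E → ℝ with |φ_k(e)| ≤ κ(e) for all e and net supply at least η_i at every vertex i of the member S̄_k ∈ 𝒮, i.e., the feasible region of the pseudo-flow problem projects onto K. -/

import Mathlib

open Finset Pointwise

/-- Discrete layer-cake: the weighted isoperimetric inequalities on level sets imply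
the inequality `∑ η·y ≤ ∑ κ·|∇y|` for nonnegative `y` supported on `S`. -/
private lemma layercake_aux {V : Type*} [Fintype V] [DecidableEq V]
    (E : Finset (V × V)) (S : Finset V) (η : V → ℝ) (κ : V × V → ℝ)
    (hκ0 : ∀ e, 0 ≤ κ e)
    (hiso : ∀ T ⊆ S, ∑ i ∈ T, η i
      ≤ ∑ e ∈ E.filter fun e => (e.1 ∈ T ∧ e.2 ∉ T) ∨ (e.1 ∉ T ∧ e.2 ∈ T), κ e) :
    ∀ n : ℕ, ∀ y : V → ℝ, (∀ i, 0 ≤ y i) → (∀ i ∉ S, y i = 0) →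
      ((Finset.univ.image y).filter (fun v => 0 < v)).card ≤ n →
      ∑ i ∈ S, η i * y i ≤ ∑ e ∈ E, κ e * |y e.2 - y e.1| := by
  classical
  intro n
  induction n with
  | zero =>
    intro y hy0 hyS hcard
    have hzero : ∀ i, y i = 0 := by
      intro i
      by_contra h
      have hpos : 0 < y i := lt_of_le_of_ne (hy0 i) (Ne.symm h)
      have hmem : y i ∈ (Finset.univ.image y).filter (fun v => 0 < v) :=
        Finset.mem_filter.2 ⟨Finset.mem_image_of_mem y (Finset.mem_univ i), hpos⟩
      have := Finset.card_pos.2 ⟨_, hmem⟩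
      omega
    simp [hzero]
  | succ n ih =>
    intro y hy0 hyS hcard
    set P := (Finset.univ.image y).filter (fun v => 0 < v) with hPdef
    rcases Nat.lt_or_ge P.card (n + 1) with hlt | hge
    · exact ih y hy0 hyS (Nat.lt_succ_iff.mp hlt)
    have hPne : P.Nonempty := Finset.card_pos.mp (by omega)
    set m := P.min' hPne with hmdef
    have hmP : m ∈ P := P.min'_mem hPne
    have hm0 : 0 < m := (Finset.mem_filter.mp hmP).2
    have hmle : ∀ i, 0 < y i → m ≤ y i := fun i hi =>
      P.min'_le _ (Finset.mem_filter.mpr ⟨Finset.mem_image_of_mem y (Finset.mem_univ i), hi⟩)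
    set T := S.filter (fun i => 0 < y i) with hTdef
    have hTS : T ⊆ S := Finset.filter_subset _ _
    have hTmem : ∀ i, i ∈ T ↔ 0 < y i := by
      intro i
      constructor
      · intro h; exact (Finset.mem_filter.mp h).2
      · intro h
        refine Finset.mem_filter.mpr ⟨?_, h⟩
        by_contra hiS
        rw [hyS i hiS] at h
        exact lt_irrefl 0 h
    set y' : V → ℝ := fun i => if 0 < y i then y i - m else 0 with hy'def
    have hy'0 : ∀ i, 0 ≤ y' i := by
      intro i
      simp only [hy'def]
      split
      · linarith [hmle i ‹_›]
      · exact le_refl 0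
    have hy'S : ∀ i ∉ S, y' i = 0 := by
      intro i hi
      simp only [hy'def, hyS i hi]
      norm_num
    have hcard' : ((Finset.univ.image y').filter (fun v => 0 < v)).card ≤ n := by
      have hsub : ((Finset.univ.image y').filter (fun v => 0 < v)).image (fun v => v + m)
          ⊆ P.erase m := by
        intro v hv
        obtain ⟨w, hw, rfl⟩ := Finset.mem_image.mp hv
        obtain ⟨hwim, hwpos⟩ := Finset.mem_filter.mp hw
        obtain ⟨i, _, rfl⟩ := Finset.mem_image.mp hwim
        have hyi : 0 < y i := by
          by_contra h
          simp only [hy'def, if_neg h] at hwpos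
          exact lt_irrefl 0 hwpos
        have hval : y' i + m = y i := by
          simp only [hy'def, if_pos hyi]; ring
        refine Finset.mem_erase.mpr ⟨?_, ?_⟩
        · rw [hval]
          intro hcon
          rw [hcon] at hval
          linarith
        · rw [hval]
          exact Finset.mem_filter.mpr ⟨Finset.mem_image_of_mem y (Finset.mem_univ i), hyi⟩
      have h1 : (((Finset.univ.image y').filter (fun v => 0 < v)).image (fun v => v + m)).card
          = ((Finset.univ.image y').filter (fun v => 0 < v)).card :=
        Finset.card_image_of_injective _ (add_left_injective m)
      have h2 := Finset.card_le_card hsub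
      have h3 : (P.erase m).card = P.card - 1 := Finset.card_erase_of_mem hmP
      omega
    -- split the LHS
    have hsplit : ∀ i, y i = y' i + (if 0 < y i then m else 0) := by
      intro i
      simp only [hy'def]
      by_cases h : 0 < y i
      · rw [if_pos h, if_pos h]; ring
      · rw [if_neg h, if_neg h]
        have := hy0 i
        push_neg at h
        linarith
    have hL : ∑ i ∈ S, η i * y i
        = (∑ i ∈ S, η i * y' i) + m * ∑ i ∈ T, η i := by
      have step : ∀ i ∈ S, η i * y i = η i * y' i + (if i ∈ T then η i * m else 0) := by
        intro i _
        rw [hsplit i]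
        by_cases h : 0 < y i
        · rw [if_pos h, if_pos ((hTmem i).mpr h)]; ring
        · rw [if_neg h, if_neg (fun hc => h ((hTmem i).mp hc))]; ring
      rw [Finset.sum_congr rfl step, Finset.sum_add_distrib]
      congr 1
      rw [Finset.sum_ite_mem, Finset.inter_eq_right.mpr hTS, ← Finset.sum_mul]
      ring
    -- split the RHS, edge by edge
    have hR : ∀ e ∈ E, |y e.2 - y e.1| = |y' e.2 - y' e.1|
        + (if (e.1 ∈ T ∧ e.2 ∉ T) ∨ (e.1 ∉ T ∧ e.2 ∈ T) then m else 0) := by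
      intro e _
      have h1 := hTmem e.1
      have h2 := hTmem e.2
      by_cases ha : 0 < y e.1 <;> by_cases hb : 0 < y e.2
      · rw [if_neg (by simp [h1, h2, ha, hb])]
        simp only [hy'def, if_pos ha, if_pos hb]
        rw [show y e.2 - m - (y e.1 - m) = y e.2 - y e.1 by ring, add_zero]
      · have hb0 : y e.2 = 0 := le_antisymm (not_lt.mp hb) (hy0 e.2)
        rw [if_pos (by simp [h1, h2, ha, hb])]
        simp only [hy'def, if_pos ha, if_neg hb]
        have hma := hmle e.1 ha
        rw [hb0, abs_of_nonpos (by linarith), abs_of_nonpos (by linarith)]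
        ring
      · have ha0 : y e.1 = 0 := le_antisymm (not_lt.mp ha) (hy0 e.1)
        rw [if_pos (by simp [h1, h2, ha, hb])]
        simp only [hy'def, if_pos hb, if_neg ha]
        have hmb := hmle e.2 hb
        rw [ha0, abs_of_nonneg (by linarith), abs_of_nonneg (by linarith)]
        ring
      · have ha0 : y e.1 = 0 := le_antisymm (not_lt.mp ha) (hy0 e.1)
        have hb0 : y e.2 = 0 := le_antisymm (not_lt.mp hb) (hy0 e.2)
        rw [if_neg (by simp [h1, h2, ha, hb])]
        simp only [hy'def, if_neg ha, if_neg hb]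
        rw [ha0, hb0]
        norm_num
    have hRsum : ∑ e ∈ E, κ e * |y e.2 - y e.1|
        = (∑ e ∈ E, κ e * |y' e.2 - y' e.1|)
          + m * ∑ e ∈ E.filter
              (fun e => (e.1 ∈ T ∧ e.2 ∉ T) ∨ (e.1 ∉ T ∧ e.2 ∈ T)), κ e := by
      have step : ∀ e ∈ E, κ e * |y e.2 - y e.1|
          = κ e * |y' e.2 - y' e.1|
            + (if (e.1 ∈ T ∧ e.2 ∉ T) ∨ (e.1 ∉ T ∧ e.2 ∈ T) then κ e * m else 0) := by
        intro e he
        rw [hR e he]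
        by_cases h : (e.1 ∈ T ∧ e.2 ∉ T) ∨ (e.1 ∉ T ∧ e.2 ∈ T)
        · rw [if_pos h, if_pos h]; ring
        · rw [if_neg h, if_neg h]; ring
      rw [Finset.sum_congr rfl step, Finset.sum_add_distrib]
      congr 1
      rw [← Finset.sum_filter, ← Finset.sum_mul]
      ring
    have hIH := ih y' hy'0 hy'S hcard'
    have hT := hiso T hTS
    rw [hL, hRsum]
    exact add_le_add hIH (mul_le_mul_of_nonneg_left hT hm0.le)

/-- Lift and project: if `(η, κ)` satisfies `κ ≥ 0`, `∑ κ ≤ 1` and the weighted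
isoperimetric inequalities for all `T` contained in a member of the scale, then for
each `k` there is a pseudo-flow `φ_k` bounded by `κ` whose net supply at each vertex
of `S̄_k` is at least `η`. -/
theorem stmt15 {V : Type*} [Fintype V] [DecidableEq V]
    (E : Finset (V × V)) (hE : ∀ e ∈ E, e.1 ≠ e.2)
    (Sbar : V → Finset V)
    (η : V → ℝ) (κ : V × V → ℝ)
    (hκ0 : ∀ e, 0 ≤ κ e) (hκ1 : ∑ e ∈ E, κ e ≤ 1)
    (hiso : ∀ k : V, ∀ T ⊆ Sbar k,
      ∑ i ∈ T, η i
        ≤ ∑ e ∈ E.filter fun e => (e.1 ∈ T ∧ e.2 ∉ T) ∨ (e.1 ∉ T ∧ e.2 ∈ T), κ e) :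
    ∀ k : V, ∃ φ : V × V → ℝ,
      (∀ e ∈ E, |φ e| ≤ κ e) ∧
      ∀ i ∈ Sbar k,
        η i ≤ (∑ e ∈ E.filter fun e => e.2 = i, φ e)
          - ∑ e ∈ E.filter fun e => e.1 = i, φ e := by
  classical
  intro k
  by_contra hcon
  set S := Sbar k with hSdef
  -- capacities extended by zero off E
  set κ' : V × V → ℝ := fun e => if e ∈ E then κ e else 0 with hκ'def
  have hκ'0 : ∀ e, 0 ≤ κ' e := by
    intro e
    by_cases h : e ∈ E <;> simp [hκ'def, h, hκ0 e]
  set Φ : Set (V × V → ℝ) := Set.univ.pi (fun e => Set.Icc (-(κ' e)) (κ' e)) with hΦdef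
  set net : (V × V → ℝ) → V → ℝ := fun φ i =>
    (∑ e ∈ E.filter fun e => e.2 = i, φ e) - ∑ e ∈ E.filter fun e => e.1 = i, φ e
    with hnetdef
  set Kc : Set (V → ℝ) := {z | ∀ i ∈ S, z i ≤ 0} with hKcdef
  set D : Set (V → ℝ) := (net '' Φ) + Kc with hDdef
  -- η is not in D, else the goal holds
  have hηD : η ∉ D := by
    intro hη
    obtain ⟨c, hc, z, hz, hcz⟩ := Set.mem_add.mp hη
    obtain ⟨φ, hφ, rfl⟩ := hc
    apply hcon
    refine ⟨φ, fun e he => ?_, fun i hi => ?_⟩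
    · have hb := hφ e (Set.mem_univ e)
      rw [Set.mem_Icc] at hb
      have : κ' e = κ e := by simp [hκ'def, he]
      rw [this] at hb
      exact abs_le.mpr hb
    · have happ : net φ i + z i = η i := congrFun hcz i
      have := hz i hi
      simp only [hnetdef] at happ
      linarith [happ, this]
  -- the set D is closed and convex
  have hΦc : IsCompact Φ := isCompact_univ_pi (fun e => isCompact_Icc)
  have hΦconvex : Convex ℝ Φ := convex_pi (fun e _ => convex_Icc _ _)
  have hnetlin : IsLinearMap ℝ net := by
    constructor
    · intro φ ψ
      funext i
      simp only [hnetdef, Pi.add_apply, Finset.sum_add_distrib]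
      ring
    · intro c φ
      funext i
      simp only [hnetdef, Pi.smul_apply, smul_eq_mul, ← Finset.mul_sum]
      ring
  have hnetcont : Continuous net := by
    apply continuous_pi
    intro i
    exact (continuous_finset_sum _ fun e _ => continuous_apply e).sub
      (continuous_finset_sum _ fun e _ => continuous_apply e)
  have hCc : IsCompact (net '' Φ) := hΦc.image hnetcont
  have hCconv : Convex ℝ (net '' Φ) := hΦconvex.is_linear_image hnetlin
  have hKclosed : IsClosed Kc := by
    have : Kc = ⋂ i ∈ S, {z : V → ℝ | z i ≤ 0} := by
      ext z
      simp [hKcdef]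
    rw [this]
    exact isClosed_biInter (fun i _ =>
      isClosed_le (continuous_apply i) continuous_const)
  have hKconv : Convex ℝ Kc := by
    intro z hz w hw a b ha hb _
    intro i hi
    have h1 := hz i hi
    have h2 := hw i hi
    simp only [Pi.add_apply, Pi.smul_apply, smul_eq_mul]
    nlinarith
  have hDclosed : IsClosed D := hKclosed.add_left_of_isCompact hCc
  have hDconv : Convex ℝ D := hCconv.add hKconv
  -- separate η from D
  obtain ⟨f, u, hfD, hfη⟩ := geometric_hahn_banach_closed_point hDconv hDclosed hηD
  set yv : V → ℝ := fun i => f (Pi.single i 1) with hyvdef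
  have hfx : ∀ x : V → ℝ, f x = ∑ i, x i * yv i := by
    intro x
    have hx : x = ∑ i, x i • (Pi.single i 1 : V → ℝ) := by
      funext j
      rw [Finset.sum_apply]
      simp [Pi.single_apply, mul_ite]
    conv_lhs => rw [hx]
    rw [map_sum]
    simp [hyvdef]
  -- basic members of D
  have h0Φ : (0 : V × V → ℝ) ∈ Φ := by
    intro e _
    rw [Set.mem_Icc]
    constructor
    · simpa using neg_nonpos.mpr (hκ'0 e)
    · exact hκ'0 e
  have hnet0 : net (0 : V × V → ℝ) = 0 := by
    funext i
    simp [hnetdef]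
  have hmemD : ∀ z ∈ Kc, z ∈ D := by
    intro z hz
    show z ∈ net '' Φ + Kc
    rw [Set.mem_add]
    exact ⟨0, ⟨0, h0Φ, hnet0⟩, z, hz, zero_add z⟩
  have h0D : (0 : V → ℝ) ∈ D := hmemD 0 (fun i _ => le_refl 0)
  have hu0 : 0 < u := by
    have := hfD 0 h0D
    simpa using this
  -- yv vanishes off S
  have hyoff : ∀ i ∉ S, yv i = 0 := by
    intro i hi
    by_contra hne
    have hmem : ∀ t : ℝ, t • (Pi.single i 1 : V → ℝ) ∈ D := by
      intro t
      apply hmemD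
      intro j hj
      have hji : j ≠ i := fun h => hi (h ▸ hj)
      simp [Pi.single_apply, hji]
    have hlt : ∀ t : ℝ, t * yv i < u := by
      intro t
      have := hfD _ (hmem t)
      simpa [hyvdef] using this
    have := hlt ((|u| + 1) / yv i)
    rw [div_mul_cancel₀ _ hne] at this
    have := le_abs_self u
    linarith
  -- yv is nonnegative
  have hypos : ∀ i, 0 ≤ yv i := by
    intro i
    by_cases hi : i ∈ S
    · by_contra hneg
      push_neg at hneg
      have hne : yv i ≠ 0 := ne_of_lt hneg
      have hmem : ((u + 1) / (-(yv i))) • (-((Pi.single i 1 : V → ℝ))) ∈ D := by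
        apply hmemD
        intro j hj
        by_cases hji : j = i
        · rw [hji]
          have ht : 0 ≤ (u + 1) / (-(yv i)) :=
            div_nonneg (by linarith) (by linarith)
          simp only [Pi.smul_apply, Pi.neg_apply, Pi.single_eq_same, smul_eq_mul]
          linarith
        · simp [Pi.single_apply, hji]
      have hval := hfD _ hmem
      rw [map_smul, smul_eq_mul, map_neg] at hval
      have hfy : f ((Pi.single i 1 : V → ℝ)) = yv i := rfl
      rw [hfy] at hval
      have heq : (u + 1) / (-(yv i)) * -(yv i) = u + 1 :=
        div_mul_cancel₀ _ (neg_ne_zero.mpr hne)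
      rw [heq] at hval
      linarith
    · rw [hyoff i hi]
  -- the optimal flow for yv
  set φs : V × V → ℝ := fun e =>
    if e ∈ E then (if yv e.1 ≤ yv e.2 then κ e else -κ e) else 0 with hφsdef
  have hφsΦ : φs ∈ Φ := by
    intro e _
    rw [Set.mem_Icc]
    constructor
    · by_cases he : e ∈ E
      · by_cases hy : yv e.1 ≤ yv e.2 <;>
          simp [hφsdef, hκ'def, he, hy] <;> linarith [hκ0 e]
      · simp [hφsdef, hκ'def, he]
    · by_cases he : e ∈ E
      · by_cases hy : yv e.1 ≤ yv e.2 <;>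
          simp [hφsdef, hκ'def, he, hy] <;> linarith [hκ0 e]
      · simp [hφsdef, hκ'def, he]
  have hφsD : net φs ∈ D := by
    show net φs ∈ net '' Φ + Kc
    rw [Set.mem_add]
    exact ⟨net φs, ⟨φs, hφsΦ, rfl⟩, 0, fun i _ => le_refl 0, add_zero _⟩
  -- compute f on net flows
  have hswap : ∀ ψ : V × V → ℝ, f (net ψ) = ∑ e ∈ E, ψ e * (yv e.2 - yv e.1) := by
    intro ψ
    rw [hfx]
    have hA : ∑ i, (∑ e ∈ E.filter fun e => e.2 = i, ψ e) * yv i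
        = ∑ e ∈ E, ψ e * yv e.2 := by
      rw [← Finset.sum_fiberwise_of_maps_to (fun e (_ : e ∈ E) => Finset.mem_univ e.2)
        (fun e => ψ e * yv e.2)]
      apply Finset.sum_congr rfl
      intro i _
      rw [Finset.sum_mul]
      apply Finset.sum_congr rfl
      intro e he
      rw [(Finset.mem_filter.mp he).2]
    have hB : ∑ i, (∑ e ∈ E.filter fun e => e.1 = i, ψ e) * yv i
        = ∑ e ∈ E, ψ e * yv e.1 := by
      rw [← Finset.sum_fiberwise_of_maps_to (fun e (_ : e ∈ E) => Finset.mem_univ e.1)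
        (fun e => ψ e * yv e.1)]
      apply Finset.sum_congr rfl
      intro i _
      rw [Finset.sum_mul]
      apply Finset.sum_congr rfl
      intro e he
      rw [(Finset.mem_filter.mp he).2]
    calc ∑ i, net ψ i * yv i
        = ∑ i, ((∑ e ∈ E.filter fun e => e.2 = i, ψ e) * yv i
            - (∑ e ∈ E.filter fun e => e.1 = i, ψ e) * yv i) := by
          apply Finset.sum_congr rfl
          intro i _
          simp only [hnetdef]
          ring
      _ = (∑ i, (∑ e ∈ E.filter fun e => e.2 = i, ψ e) * yv i)
            - ∑ i, (∑ e ∈ E.filter fun e => e.1 = i, ψ e) * yv i := by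
          rw [Finset.sum_sub_distrib]
      _ = (∑ e ∈ E, ψ e * yv e.2) - ∑ e ∈ E, ψ e * yv e.1 := by rw [hA, hB]
      _ = ∑ e ∈ E, ψ e * (yv e.2 - yv e.1) := by
          rw [← Finset.sum_sub_distrib]
          apply Finset.sum_congr rfl
          intro e _
          ring
  have hval : f (net φs) = ∑ e ∈ E, κ e * |yv e.2 - yv e.1| := by
    rw [hswap]
    apply Finset.sum_congr rfl
    intro e he
    by_cases h : yv e.1 ≤ yv e.2
    · rw [hφsdef]
      simp only [if_pos he, if_pos h]
      rw [abs_of_nonneg (sub_nonneg.mpr h)]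
    · rw [hφsdef]
      simp only [if_pos he, if_neg h]
      rw [abs_of_neg (sub_neg.mpr (lt_of_not_ge h))]
      ring
  have hfη2 : f η = ∑ i ∈ S, η i * yv i := by
    rw [hfx]
    exact (Finset.sum_subset (Finset.subset_univ S)
      (fun i _ hi => by rw [hyoff i hi, mul_zero])).symm
  -- layer cake gives the contradiction
  have hlc := layercake_aux E S η κ hκ0 (hiso k)
    ((Finset.univ.image yv).filter (fun v => 0 < v)).card yv hypos hyoff le_rfl
  have h1 : f (net φs) < u := hfD _ hφsD
  rw [hval] at h1
  rw [hfη2] at hfη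
  linarith
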